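/- Let t : [-1,1] → [-1,1] be a piecewise-linear map with t(0) = 0, let [y⁻,y⁺] be a liftable range for t with y⁺ < γ, where γ is the largest right contour point of t below L(y⁻), and let γ₁ < γ₂ < ⋯ < γ_k = γ enumerate the right contour points of t strictly between y⁺ and L(y⁻), with γ_{k+1} = L(y⁻) and γ₀ the right contour point immediately preceding γ₁ (or 0). Then there exist points y⁻ ≤ δ_{k+1} < δ_k < ⋯ < δ₁ < 0 such that for each 1 ≤ i ≤ k+1: (1) δ_i is a left departure of t with t(δ_i) = t(γ_i), and (2) t([δ_i, y⁺]) ⊆ t([γ_{i-1}, γ_i]). -/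
import Mathlib


open Set

/-- A positive radial departure of `f`. -/
def PosRD (f : ℝ → ℝ) (x₁ x₂ : ℝ) : Prop :=
  -1 ≤ x₁ ∧ x₁ < 0 ∧ 0 < x₂ ∧ x₂ ≤ 1 ∧ f '' Ioo x₁ x₂ = Ioo (f x₁) (f x₂)

/-- A negative radial departure of `f`. -/
def NegRD (f : ℝ → ℝ) (x₁ x₂ : ℝ) : Prop :=
  -1 ≤ x₁ ∧ x₁ < 0 ∧ 0 < x₂ ∧ x₂ ≤ 1 ∧ f '' Ioo x₁ x₂ = Ioo (f x₂) (f x₁)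

/-- A radial departure of `f` (of either orientation). -/
def RadialDeparture (f : ℝ → ℝ) (x₁ x₂ : ℝ) : Prop := PosRD f x₁ x₂ ∨ NegRD f x₁ x₂

/-- A (right) departure of `g` (viewed as a map on `[0,1]`). -/
def Departure (g : ℝ → ℝ) (x : ℝ) : Prop := 0 < x ∧ x ≤ 1 ∧ g x ∉ g '' Ico 0 x

/-- A left departure of `g` (viewed as a map on `[-1,0]`). -/
def LeftDeparture (g : ℝ → ℝ) (x : ℝ) : Prop := -1 ≤ x ∧ x < 0 ∧ g x ∉ g '' Ioc x 0

/-- A (right) contour point of `g`: a departure `α` such that every departure past `α`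
is preceded (within `(α, x]`) by a departure of orientation opposite to that of `α`. -/
def ContourPoint (g : ℝ → ℝ) (α : ℝ) : Prop :=
  Departure g α ∧
    ∀ x, Departure g x → α < x → ∃ y, Departure g y ∧ α < y ∧ y ≤ x ∧ g α * g y < 0

/-- `[ym, yp]` is a liftable range for `t`. -/
def LiftableRange (t : ℝ → ℝ) (ym yp : ℝ) : Prop :=
  -1 ≤ ym ∧ ym ≤ 0 ∧ 0 ≤ yp ∧ yp ≤ 1 ∧
  t '' Icc ym 0 ⊆ t '' Icc 0 1 ∧
  ¬ ∃ y₁ y₂, RadialDeparture t y₁ y₂ ∧ ym ≤ y₁ ∧ yp < y₂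

/-- `f` is linear (affine) on the interval `[a,b]`. -/
def LinearOn (f : ℝ → ℝ) (a b : ℝ) : Prop :=
  ∀ x ∈ Icc a b, (b - a) * f x = (b - x) * f a + (x - a) * f b

/-- `f` is piecewise-linear on `[-1,1]`. -/
def PiecewiseLinear (f : ℝ → ℝ) : Prop :=
  ∃ n : ℕ, ∃ c : ℕ → ℝ, c 0 = -1 ∧ c n = 1 ∧ (∀ i < n, c i < c (i + 1)) ∧
    ∀ i < n, LinearOn f (c i) (c (i + 1))

/-- `t` is the contour factor of `g` (for maps on `[0,1]`): the contour points of `g`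
are `0 = α₀ < α₁ < ⋯ < α_n`, `t (i/n) = g (α i)`, and `t` is linear in between. -/
def IsContourFactor (g t : ℝ → ℝ) : Prop :=
  ∃ n : ℕ, 0 < n ∧ ∃ α : ℕ → ℝ, α 0 = 0 ∧ (∀ i < n, α i < α (i + 1)) ∧
    (∀ x, ContourPoint g x ↔ ∃ i, 1 ≤ i ∧ i ≤ n ∧ x = α i) ∧
    (∀ i ≤ n, t ((i : ℝ) / (n : ℝ)) = g (α i)) ∧
    (∀ i < n, LinearOn t ((i : ℝ) / (n : ℝ)) (((i : ℝ) + 1) / (n : ℝ)))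

/-- `t` is the radial contour factor of `f`: its restriction to `[0,1]` is the contour
factor of `f|[0,1]`, and `t|[-1,0] ∘ r` is the contour factor of `f|[-1,0] ∘ r`,
where `r x = -x`. -/
def IsRadialContourFactor (f t : ℝ → ℝ) : Prop :=
  IsContourFactor f t ∧ IsContourFactor (fun x => f (-x)) (fun x => t (-x))

/-- `f` is non-constant on each of `[0,1]` and `[-1,0]`. -/
def NonConstSides (f : ℝ → ℝ) : Prop :=
  (∃ a ∈ Icc (0:ℝ) 1, ∃ b ∈ Icc (0:ℝ) 1, f a ≠ f b) ∧
  (∃ a ∈ Icc (-1:ℝ) 0, ∃ b ∈ Icc (-1:ℝ) 0, f a ≠ f b)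

namespace S12

lemma dep_neg (f : ℝ → ℝ) (x : ℝ) : Departure (fun y => -(f y)) x ↔ Departure f x := by
  unfold Departure
  simp only [Set.mem_image, not_exists, not_and, neg_inj]

lemma leftdep_neg (f : ℝ → ℝ) (x : ℝ) : LeftDeparture (fun y => -(f y)) x ↔ LeftDeparture f x := by
  unfold LeftDeparture
  simp only [Set.mem_image, not_exists, not_and, neg_inj]

lemma contour_neg (f : ℝ → ℝ) (x : ℝ) :
    ContourPoint (fun y => -(f y)) x ↔ ContourPoint f x := by
  unfold ContourPoint
  simp only [dep_neg, neg_mul_neg]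

lemma negimg_Ioo (a b : ℝ) : Neg.neg '' Ioo a b = Ioo (-b) (-a) := by
  ext z
  constructor
  · rintro ⟨w, ⟨h1, h2⟩, rfl⟩; exact ⟨by linarith, by linarith⟩
  · rintro ⟨h1, h2⟩; exact ⟨-z, ⟨by linarith, by linarith⟩, neg_neg z⟩

lemma PosRD_neg (f : ℝ → ℝ) (a b : ℝ) : PosRD (fun y => -(f y)) a b ↔ NegRD f a b := by
  unfold PosRD NegRD
  have himg : (fun y => -(f y)) '' Ioo a b = Neg.neg '' (f '' Ioo a b) :=
    Set.image_comp Neg.neg f (Ioo a b)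
  constructor <;> rintro ⟨h1, h2, h3, h4, h5⟩ <;> refine ⟨h1, h2, h3, h4, ?_⟩
  · rw [himg, ← negimg_Ioo (f b) (f a)] at h5
    exact (Set.image_eq_image neg_injective).mp h5
  · rw [himg, ← negimg_Ioo (f b) (f a)]
    exact congrArg _ h5

lemma NegRD_neg (f : ℝ → ℝ) (a b : ℝ) : NegRD (fun y => -(f y)) a b ↔ PosRD f a b := by
  unfold PosRD NegRD
  have himg : (fun y => -(f y)) '' Ioo a b = Neg.neg '' (f '' Ioo a b) :=
    Set.image_comp Neg.neg f (Ioo a b)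
  constructor <;> rintro ⟨h1, h2, h3, h4, h5⟩ <;> refine ⟨h1, h2, h3, h4, ?_⟩
  · rw [himg, ← negimg_Ioo (f a) (f b)] at h5
    exact (Set.image_eq_image neg_injective).mp h5
  · rw [himg, ← negimg_Ioo (f a) (f b)]
    exact congrArg _ h5

lemma RD_neg (f : ℝ → ℝ) (a b : ℝ) :
    RadialDeparture (fun y => -(f y)) a b ↔ RadialDeparture f a b := by
  unfold RadialDeparture
  rw [PosRD_neg, NegRD_neg, or_comm]

lemma imgsub_neg {f : ℝ → ℝ} {s u : Set ℝ} :
    (fun y => -(f y)) '' s ⊆ (fun y => -(f y)) '' u ↔ f '' s ⊆ f '' u := by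
  constructor <;> intro h z hz
  · obtain ⟨x, hx, rfl⟩ := hz
    obtain ⟨w, hw, hwv⟩ := h ⟨x, hx, rfl⟩
    exact ⟨w, hw, neg_inj.mp hwv⟩
  · obtain ⟨x, hx, rfl⟩ := hz
    obtain ⟨w, hw, hwv⟩ := h ⟨x, hx, rfl⟩
    exact ⟨w, hw, by simp only []; rw [hwv]⟩

lemma pl_cont {f : ℝ → ℝ} (h : PiecewiseLinear f) : ContinuousOn f (Icc (-1) 1) := by
  obtain ⟨n, c, hc0, hcn, hmono, hlin⟩ := h
  have cmono : ∀ b, b ≤ n → ∀ a, a ≤ b → c a ≤ c b := by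
    intro b
    induction b with
    | zero => intro _ a ha; interval_cases a; exact le_rfl
    | succ b ih =>
      intro hb a ha
      rcases Nat.lt_or_ge a (b + 1) with h' | h'
      · exact le_trans (ih (by omega) a (by omega)) (le_of_lt (hmono b (by omega)))
      · have : a = b + 1 := by omega
        rw [this]
  have hpiece : ∀ i, i < n → ContinuousOn f (Icc (c i) (c (i + 1))) := by
    intro i hi
    have hlt := hmono i hi
    have hne : c (i + 1) - c i ≠ 0 := by linarith
    have hcont : ContinuousOn
        (fun x => ((c (i + 1) - x) * f (c i) + (x - c i) * f (c (i + 1))) / (c (i + 1) - c i))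
        (Icc (c i) (c (i + 1))) := (Continuous.continuousOn (by fun_prop))
    refine hcont.congr ?_
    intro x hx
    have e := hlin i hi x hx
    rw [eq_div_iff hne]
    linarith
  have hglue : ∀ m, m ≤ n → ContinuousOn f (Icc (c 0) (c m)) := by
    intro m
    induction m with
    | zero =>
      intro _
      rw [Set.Icc_self]
      exact continuousOn_singleton f (c 0)
    | succ m ih =>
      intro hm
      have h1 := ih (by omega)
      have h2 := hpiece m (by omega)
      have hun : Icc (c 0) (c (m + 1)) = Icc (c 0) (c m) ∪ Icc (c m) (c (m + 1)) := by
        rw [Set.Icc_union_Icc_eq_Icc (cmono m (by omega) 0 (by omega))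
          (le_of_lt (hmono m (by omega)))]
      rw [hun]
      intro x hx
      have hcwa1 : ContinuousWithinAt f (Icc (c 0) (c m)) x := by
        by_cases hxm : x ∈ Icc (c 0) (c m)
        · exact h1 x hxm
        · exact continuousWithinAt_of_notMem_closure (by rwa [IsClosed.closure_eq isClosed_Icc])
      have hcwa2 : ContinuousWithinAt f (Icc (c m) (c (m + 1))) x := by
        by_cases hxm : x ∈ Icc (c m) (c (m + 1))
        · exact h2 x hxm
        · exact continuousWithinAt_of_notMem_closure (by rwa [IsClosed.closure_eq isClosed_Icc])
      exact hcwa1.union hcwa2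
  have := hglue n le_rfl
  rwa [hc0, hcn] at this

lemma record {f : ℝ → ℝ} (Hc : ContinuousOn f (Icc 0 1)) (hf0 : f 0 = 0)
    {γ : ℝ} (hdep : Departure f γ) (hpos : 0 < f γ) :
    ∀ x, 0 ≤ x → x < γ → f x < f γ := by
  intro x hx0 hxγ
  by_contra hcon
  push_neg at hcon
  have hx1 : x ≤ 1 := le_of_lt (lt_of_lt_of_le hxγ hdep.2.1)
  have hsub : Icc (0:ℝ) x ⊆ Icc 0 1 := Icc_subset_Icc le_rfl hx1
  have : f γ ∈ Icc (f 0) (f x) := by rw [hf0]; exact ⟨le_of_lt hpos, hcon⟩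
  obtain ⟨cc, hcc, hfcc⟩ := intermediate_value_Icc hx0 (Hc.mono hsub) this
  exact hdep.2.2 ⟨cc, ⟨hcc.1, lt_of_le_of_lt hcc.2 hxγ⟩, hfcc⟩

lemma dep_ne {f : ℝ → ℝ} (hf0 : f 0 = 0) {γ : ℝ} (hdep : Departure f γ) : f γ ≠ 0 :=
  fun h => hdep.2.2 ⟨0, ⟨le_rfl, hdep.1⟩, by rw [hf0, h]⟩

lemma mk_posRD {f : ℝ → ℝ} (Hc : ContinuousOn f (Icc (-1) 1))
    {a b : ℝ} (ha1 : -1 ≤ a) (ha0 : a < 0) (hb0 : 0 < b) (hb1 : b ≤ 1)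
    (h : ∀ w, a < w → w < b → f a < f w ∧ f w < f b) : PosRD f a b := by
  refine ⟨ha1, ha0, hb0, hb1, ?_⟩
  have hab : a ≤ b := by linarith
  have hsub : Icc a b ⊆ Icc (-1:ℝ) 1 := Icc_subset_Icc ha1 hb1
  apply Set.Subset.antisymm
  · rintro z ⟨w, hw, rfl⟩
    exact ⟨(h w hw.1 hw.2).1, (h w hw.1 hw.2).2⟩
  · exact intermediate_value_Ioo hab (Hc.mono hsub)

end S12

namespace S12

open Filter

lemma build_rd {f : ℝ → ℝ} (Hc : ContinuousOn f (Icc (-1) 1)) (hf0 : f 0 = 0)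
    {ym yp γc x : ℝ} (hym1 : -1 ≤ ym)
    (hdep : Departure f γc) (hpos : 0 < f γc) (hypc : yp < γc)
    (hymx : ym ≤ x) (hx0 : x ≤ 0)
    (hlow : ∀ z, 0 ≤ z → z ≤ γc → f x < f z)
    (hup : ∀ w, x ≤ w → w ≤ 0 → f w < f γc) :
    ∃ y₁ y₂, RadialDeparture f y₁ y₂ ∧ ym ≤ y₁ ∧ yp < y₂ := by
  have hγ0 : 0 < γc := hdep.1
  have hγ1 : γc ≤ 1 := hdep.2.1
  have hrec := record (Hc.mono (Icc_subset_Icc (by norm_num) le_rfl)) hf0 hdep hpos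
  set K : Set ℝ := Icc x 0 ∩ f ⁻¹' Iic (f x) with hK
  have hKc : IsClosed K := by
    refine ContinuousOn.preimage_isClosed_of_isClosed
      (Hc.mono (Icc_subset_Icc (by linarith) (by norm_num))) isClosed_Icc isClosed_Iic
  have hKne : K.Nonempty := ⟨x, ⟨le_rfl, hx0⟩, mem_preimage.mpr (mem_Iic.mpr le_rfl)⟩
  have hKbdd : BddAbove K := ⟨0, fun z hz => hz.1.2⟩
  set y1 := sSup K with hy1
  have hy1K : y1 ∈ K := hKc.csSup_mem hKne hKbdd
  have hy1x : x ≤ y1 := hy1K.1.1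
  have hy10 : y1 ≤ 0 := hy1K.1.2
  have hfy1 : f y1 ≤ f x := hy1K.2
  have hfx0 : f x < 0 := by have := hlow 0 le_rfl (le_of_lt hγ0); rwa [hf0] at this
  have hy1neg : y1 < 0 := by
    rcases lt_or_eq_of_le hy10 with h | h
    · exact h
    · exfalso; rw [h, hf0] at hfy1; linarith
  refine ⟨y1, γc, Or.inl (mk_posRD Hc (by linarith) hy1neg hγ0 hγ1 ?_), by linarith, hypc⟩
  intro w hw1 hw2
  rcases le_or_gt w 0 with hw0 | hw0
  · have hwK : w ∉ K := fun hc => absurd (le_csSup hKbdd hc) (not_le.mpr hw1)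
    have hfw : f x < f w := by
      by_contra hc; push_neg at hc
      exact hwK ⟨⟨by linarith, hw0⟩, hc⟩
    exact ⟨lt_of_le_of_lt hfy1 hfw, hup w (by linarith) hw0⟩
  · exact ⟨lt_of_le_of_lt hfy1 (hlow w (le_of_lt hw0) (le_of_lt hw2)),
      hrec w (le_of_lt hw0) hw2⟩

lemma nonempty_left {f : ℝ → ℝ} (Hc : ContinuousOn f (Icc (-1) 1)) (hf0 : f 0 = 0)
    {ym yp Ly γc : ℝ} (hym1 : -1 ≤ ym)
    (hnoRD : ¬∃ y₁ y₂, RadialDeparture f y₁ y₂ ∧ ym ≤ y₁ ∧ yp < y₂)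
    (hLy : IsLeast {L : ℝ | 0 < L ∧ f '' Icc ym 0 ⊆ f '' Icc 0 L} Ly)
    (hdep : Departure f γc) (hpos : 0 < f γc) (hypc : yp < γc) (hcLy : γc < Ly) :
    ∃ yB, ym ≤ yB ∧ yB ≤ 0 ∧ f γc ≤ f yB := by
  by_contra hcon; push_neg at hcon
  by_cases hx : ∃ x, ym ≤ x ∧ x ≤ 0 ∧ ∀ z, 0 ≤ z → z ≤ γc → f x < f z
  · obtain ⟨x, h1, h2, h3⟩ := hx
    exact hnoRD (build_rd Hc hf0 hym1 hdep hpos hypc h1 h2 h3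
      (fun w hw1 hw2 => hcon w (by linarith) hw2))
  · push_neg at hx
    have hmem : γc ∈ {L : ℝ | 0 < L ∧ f '' Icc ym 0 ⊆ f '' Icc 0 L} := by
      refine ⟨hdep.1, ?_⟩
      rintro v ⟨y, ⟨hy1, hy2⟩, rfl⟩
      obtain ⟨z, hz1, hz2, hz3⟩ := hx y hy1 hy2
      have hfyc : f y < f γc := hcon y hy1 hy2
      have hsub : uIcc z γc ⊆ Icc (-1:ℝ) 1 :=
        uIcc_subset_Icc ⟨by linarith, by linarith [hdep.2.1]⟩
          ⟨by linarith [hdep.1], hdep.2.1⟩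
      have hv : f y ∈ uIcc (f z) (f γc) := by
        rw [Set.uIcc_of_le (by linarith)]; exact ⟨hz3, le_of_lt hfyc⟩
      obtain ⟨cc, hcc, hfcc⟩ := intermediate_value_uIcc (Hc.mono hsub) hv
      have hcc' : cc ∈ Icc 0 γc :=
        (uIcc_subset_Icc ⟨hz1, hz2⟩ ⟨le_of_lt hdep.1, le_rfl⟩) hcc
      exact ⟨cc, hcc', hfcc⟩
    exact absurd (hLy.2 hmem) (not_le.mpr hcLy)

lemma firsthit {f : ℝ → ℝ} {L b : ℝ} (Hc : ContinuousOn f (Icc 0 L)) (hf0 : f 0 = 0)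
    (hL : 0 < L) (hb : 0 < b) (hatt : ∃ x, x ∈ Icc 0 L ∧ b ≤ f x) :
    ∃ T, 0 < T ∧ T ≤ L ∧ f T = b ∧ ∀ x, 0 ≤ x → x < T → f x < b := by
  set S : Set ℝ := Icc 0 L ∩ f ⁻¹' Ici b with hS
  have hSc : IsClosed S := Hc.preimage_isClosed_of_isClosed isClosed_Icc isClosed_Ici
  have hSne : S.Nonempty := by obtain ⟨x, h1, h2⟩ := hatt; exact ⟨x, h1, h2⟩
  have hSbdd : BddBelow S := ⟨0, fun z hz => hz.1.1⟩
  set T := sInf S with hT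
  have hTS : T ∈ S := hSc.csInf_mem hSne hSbdd
  have hT0 : 0 ≤ T := hTS.1.1
  have hTL : T ≤ L := hTS.1.2
  have hfT : b ≤ f T := hTS.2
  have hTpos : 0 < T := by
    rcases eq_or_lt_of_le hT0 with h | h
    · exfalso; rw [← h, hf0] at hfT; linarith
    · exact h
  have hbefore : ∀ x, 0 ≤ x → x < T → f x < b := by
    intro x h1 h2
    by_contra hc; push_neg at hc
    exact absurd (csInf_le hSbdd ⟨⟨h1, by linarith⟩, hc⟩) (not_le.mpr h2)
  refine ⟨T, hTpos, hTL, ?_, hbefore⟩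
  rcases eq_or_lt_of_le hfT with h | h
  · exact h.symm
  · exfalso
    have hcwa : ContinuousWithinAt f (Icc 0 L) T := Hc.continuousWithinAt ⟨hT0, hTL⟩
    have hmono : nhdsWithin T (Ico 0 T) ≤ nhdsWithin T (Icc 0 L) :=
      nhdsWithin_mono T (fun z hz => ⟨hz.1, le_trans (le_of_lt hz.2) hTL⟩)
    have hev1 : ∀ᶠ w in nhdsWithin T (Ico 0 T), b < f w :=
      Filter.Eventually.filter_mono hmono (hcwa.eventually (eventually_gt_nhds h))
    have hne : (nhdsWithin T (Ico 0 T)).NeBot := by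
      rw [← mem_closure_iff_nhdsWithin_neBot, closure_Ico (ne_of_lt hTpos)]
      exact ⟨hT0, le_rfl⟩
    have hev2 : ∀ᶠ w in nhdsWithin T (Ico 0 T), f w < b :=
      eventually_nhdsWithin_of_forall (fun w hw => hbefore w hw.1 hw.2)
    obtain ⟨w, hw1, hw2⟩ := (hev1.and hev2).exists
    linarith

end S12

namespace S12

lemma claimR {f : ℝ → ℝ} (Hc : ContinuousOn f (Icc (-1) 1)) (hf0 : f 0 = 0)
    {ym Ly : ℝ} (hym1 : -1 ≤ ym) (hym0 : ym < 0) (hLy1 : Ly ≤ 1)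
    (hLy : IsLeast {L : ℝ | 0 < L ∧ f '' Icc ym 0 ⊆ f '' Icc 0 L} Ly) :
    (0 < f Ly ∧ (∀ x, 0 ≤ x → x < Ly → f x < f Ly) ∧
      ∃ yB, ym ≤ yB ∧ yB ≤ 0 ∧ f yB = f Ly) ∨
    (f Ly < 0 ∧ (∀ x, 0 ≤ x → x < Ly → f Ly < f x) ∧
      ∃ yA, ym ≤ yA ∧ yA ≤ 0 ∧ f yA = f Ly) := by
  have hLy0 : 0 < Ly := hLy.1.1
  have hinc : f '' Icc ym 0 ⊆ f '' Icc 0 Ly := hLy.1.2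
  have hsubL : Icc (0:ℝ) Ly ⊆ Icc (-1:ℝ) 1 := Icc_subset_Icc (by norm_num) hLy1
  have hsubm : Icc ym (0:ℝ) ⊆ Icc (-1:ℝ) 1 := Icc_subset_Icc hym1 (by norm_num)
  have hcomp : IsCompact (Icc ym (0:ℝ)) := isCompact_Icc
  have hne : (Icc ym (0:ℝ)).Nonempty := ⟨0, le_of_lt hym0, le_rfl⟩
  obtain ⟨pmax, hpmaxm, hpmax⟩ := hcomp.exists_isMaxOn hne (Hc.mono hsubm)
  obtain ⟨pmin, hpminm, hpmin⟩ := hcomp.exists_isMinOn hne (Hc.mono hsubm)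
  set A := f pmin with hA
  set B := f pmax with hB
  have hAB : ∀ y, ym ≤ y → y ≤ 0 → A ≤ f y ∧ f y ≤ B := fun y h1 h2 =>
    ⟨isMinOn_iff.mp hpmin y ⟨h1, h2⟩, isMaxOn_iff.mp hpmax y ⟨h1, h2⟩⟩
  have hA0 : A ≤ 0 := by have := (hAB 0 (le_of_lt hym0) le_rfl).1; rwa [hf0] at this
  have hB0 : 0 ≤ B := by have := (hAB 0 (le_of_lt hym0) le_rfl).2; rwa [hf0] at this
  obtain ⟨qB, hqB, hfqB⟩ := hinc ⟨pmax, hpmaxm, rfl⟩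
  obtain ⟨qA, hqA, hfqA⟩ := hinc ⟨pmin, hpminm, rfl⟩
  have hTBex : ∃ TB, (0 ≤ TB ∧ TB ≤ Ly ∧ f TB = B ∧ (∀ x, 0 ≤ x → x < TB → f x < B)) ∧
      (0 < TB → 0 < B) := by
    rcases lt_or_eq_of_le hB0 with h | h
    · obtain ⟨T, h1, h2, h3, h4⟩ := firsthit (Hc.mono hsubL) hf0 hLy0 h ⟨qB, hqB, le_of_eq hfqB.symm⟩
      exact ⟨T, ⟨le_of_lt h1, h2, h3, h4⟩, fun _ => h⟩
    · exact ⟨0, ⟨le_rfl, le_of_lt hLy0, by rw [hf0, ← h],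
        fun x hx1 hx2 => absurd hx1 (not_le.mpr hx2)⟩, fun hc => absurd hc (lt_irrefl 0)⟩
  have hTAex : ∃ TA, (0 ≤ TA ∧ TA ≤ Ly ∧ f TA = A ∧ (∀ x, 0 ≤ x → x < TA → A < f x)) ∧
      (0 < TA → A < 0) := by
    rcases lt_or_eq_of_le hA0 with h | h
    · have Hcn : ContinuousOn (fun x => -(f x)) (Icc 0 Ly) := (Hc.mono hsubL).neg
      obtain ⟨T, h1, h2, h3, h4⟩ := firsthit (b := -A) Hcn (by simp [hf0]) hLy0 (by linarith)
        ⟨qA, hqA, by show -A ≤ -(f qA); rw [hfqA, ← hA]⟩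
      have h3' : -(f T) = -A := h3
      refine ⟨T, ⟨le_of_lt h1, h2, by linarith, ?_⟩, fun _ => h⟩
      intro x hx1 hx2
      have h5 : -(f x) < -A := h4 x hx1 hx2
      linarith
    · exact ⟨0, ⟨le_rfl, le_of_lt hLy0, by rw [hf0, h],
        fun x hx1 hx2 => absurd hx1 (not_le.mpr hx2)⟩, fun hc => absurd hc (lt_irrefl 0)⟩
  obtain ⟨TA, ⟨hTA0, hTALy, hfTA, hTArec⟩, hTApos⟩ := hTAex
  obtain ⟨TB, ⟨hTB0, hTBLy, hfTB, hTBrec⟩, hTBpos⟩ := hTBex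
  have hnotboth : A < 0 ∨ 0 < B := by
    by_contra hc; push_neg at hc
    obtain ⟨h1, h2⟩ := hc
    have hmem : Ly / 2 ∈ {L : ℝ | 0 < L ∧ f '' Icc ym 0 ⊆ f '' Icc 0 L} := by
      refine ⟨by linarith, ?_⟩
      rintro v ⟨y, hy, rfl⟩
      have h3 := hAB y hy.1 hy.2
      have hfy : f y = 0 := le_antisymm (by linarith) (by linarith)
      exact ⟨0, ⟨le_rfl, by linarith⟩, by rw [hf0, hfy]⟩
    have := hLy.2 hmem; linarith
  set L' := max TA TB with hL'
  have hL'mem : L' ∈ {L : ℝ | 0 < L ∧ f '' Icc ym 0 ⊆ f '' Icc 0 L} := by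
    constructor
    · rcases hnotboth with h | h
      · have h1 : TA ≠ 0 := fun hc => by rw [hc, hf0] at hfTA; linarith
        exact lt_of_lt_of_le (lt_of_le_of_ne hTA0 (Ne.symm h1)) (le_max_left _ _)
      · have h1 : TB ≠ 0 := fun hc => by rw [hc, hf0] at hfTB; linarith
        exact lt_of_lt_of_le (lt_of_le_of_ne hTB0 (Ne.symm h1)) (le_max_right _ _)
    · rintro v ⟨y, hy, rfl⟩
      have hy' := hAB y hy.1 hy.2
      have hsub2 : uIcc TA TB ⊆ Icc (-1:ℝ) 1 :=
        uIcc_subset_Icc ⟨by linarith, by linarith⟩ ⟨by linarith, by linarith⟩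
      have hv : f y ∈ uIcc (f TA) (f TB) := by
        rw [hfTA, hfTB, Set.uIcc_of_le (by linarith)]
        exact ⟨hy'.1, hy'.2⟩
      obtain ⟨cc, hcc, hfcc⟩ := intermediate_value_uIcc (Hc.mono hsub2) hv
      have hccm : cc ∈ Icc 0 L' :=
        (uIcc_subset_Icc ⟨hTA0, le_max_left _ _⟩ ⟨hTB0, le_max_right _ _⟩) hcc
      exact ⟨cc, hccm, hfcc⟩
  have hLyL' : Ly = L' := le_antisymm (hLy.2 hL'mem) (max_le hTALy hTBLy)
  rcases max_choice TA TB with h | h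
  · have hLyTA : Ly = TA := by rw [hLyL', hL', h]
    right
    have hApos : A < 0 := hTApos (by rw [← hLyTA]; exact hLy0)
    refine ⟨by rw [hLyTA, hfTA]; exact hApos, ?_,
      ⟨pmin, hpminm.1, hpminm.2, by rw [hLyTA, hfTA]⟩⟩
    intro x hx1 hx2
    rw [hLyTA, hfTA]
    exact hTArec x hx1 (by rwa [← hLyTA])
  · have hLyTB : Ly = TB := by rw [hLyL', hL', h]
    left
    have hBpos : 0 < B := hTBpos (by rw [← hLyTB]; exact hLy0)
    refine ⟨by rw [hLyTB, hfTB]; exact hBpos, ?_,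
      ⟨pmax, hpmaxm.1, hpmaxm.2, by rw [hLyTB, hfTB]⟩⟩
    intro x hx1 hx2
    rw [hLyTB, hfTB]
    exact hTBrec x hx1 (by rwa [← hLyTB])

end S12

namespace S12

lemma omni {f : ℝ → ℝ} (Hc : ContinuousOn f (Icc (-1) 1)) (hf0 : f 0 = 0)
    {ym yp γp γc : ℝ} (hym1 : -1 ≤ ym)
    (hnoRD : ¬∃ y₁ y₂, RadialDeparture f y₁ y₂ ∧ ym ≤ y₁ ∧ yp < y₂)
    (hp0 : 0 ≤ γp) (hpc : γp < γc)
    (hdep : Departure f γc) (hpos : 0 < f γc) (hypc : yp < γc)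
    (hB : ∃ yB, ym ≤ yB ∧ yB ≤ 0 ∧ f γc ≤ f yB)
    (hprevsrc : γp = 0 ∨ (Departure f γp ∧ f γp < 0)) :
    ∃ d, ym ≤ d ∧ d < 0 ∧ LeftDeparture f d ∧ f d = f γc ∧
      f '' Icc d yp ⊆ f '' Icc γp γc ∧
      ∀ x, ym ≤ x → x ≤ 0 → (∀ z, 0 ≤ z → z ≤ γc → f x < f z) → x < d := by
  obtain ⟨yB, hyB1, hyB2, hyB3⟩ := hB
  have hγ0 : 0 < γc := hdep.1
  have hγ1 : γc ≤ 1 := hdep.2.1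
  have Hc01 : ContinuousOn f (Icc 0 1) := Hc.mono (Icc_subset_Icc (by norm_num) le_rfl)
  have hrec := record Hc01 hf0 hdep hpos
  have hCm : ∀ x, 0 ≤ x → x ≤ γc → ∃ p, γp ≤ p ∧ p ≤ γc ∧ f p ≤ f x := by
    intro x h1 h2
    rcases hprevsrc with h | ⟨hdp, hdneg⟩
    · exact ⟨x, by rw [h]; exact h1, h2, le_rfl⟩
    · rcases le_or_gt γp x with h3 | h3
      · exact ⟨x, h3, h2, le_rfl⟩
      · have hrecp := record Hc01.neg (by simp [hf0]) ((dep_neg f γp).mpr hdp)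
          (show (0:ℝ) < -(f γp) by linarith) x h1 h3
        have hrecp' : -(f x) < -(f γp) := hrecp
        exact ⟨γp, le_rfl, le_of_lt hpc, by linarith⟩
  have hattain : ∃ cc, ym ≤ cc ∧ cc ≤ 0 ∧ f cc = f γc := by
    have hsub : uIcc yB 0 ⊆ Icc (-1:ℝ) 1 :=
      uIcc_subset_Icc ⟨le_trans hym1 hyB1, by linarith⟩ ⟨by norm_num, by norm_num⟩
    have hv : f γc ∈ uIcc (f yB) (f 0) := by
      rw [hf0, Set.uIcc_of_ge (by linarith)]
      exact ⟨le_of_lt hpos, hyB3⟩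
    obtain ⟨cc, hcc, hfcc⟩ := intermediate_value_uIcc (Hc.mono hsub) hv
    rw [Set.uIcc_of_le hyB2] at hcc
    exact ⟨cc, le_trans hyB1 hcc.1, hcc.2, hfcc⟩
  obtain ⟨c0, hc01, hc02, hc03⟩ := hattain
  set K : Set ℝ := Icc ym 0 ∩ f ⁻¹' {f γc} with hK
  have hKc : IsClosed K :=
    (Hc.mono (Icc_subset_Icc hym1 (by norm_num))).preimage_isClosed_of_isClosed
      isClosed_Icc isClosed_singleton
  have hKne : K.Nonempty := ⟨c0, ⟨hc01, hc02⟩, hc03⟩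
  have hKbdd : BddAbove K := ⟨0, fun z hz => hz.1.2⟩
  set d := sSup K with hd
  have hdK : d ∈ K := hKc.csSup_mem hKne hKbdd
  have hdym : ym ≤ d := hdK.1.1
  have hd0 : d ≤ 0 := hdK.1.2
  have hfd : f d = f γc := hdK.2
  have hdneg : d < 0 := lt_of_le_of_ne hd0 (fun hc => by rw [hc, hf0] at hfd; linarith)
  have hlt : ∀ x, d < x → x ≤ 0 → f x < f γc := by
    intro x h1 h2
    rcases lt_trichotomy (f x) (f γc) with h | h | h
    · exact h
    · exact absurd (le_csSup hKbdd ⟨⟨by linarith, h2⟩, h⟩) (not_le.mpr h1)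
    · exfalso
      have hsub : uIcc x 0 ⊆ Icc (-1:ℝ) 1 :=
        uIcc_subset_Icc ⟨by linarith, by linarith⟩ ⟨by norm_num, by norm_num⟩
      have hv : f γc ∈ uIcc (f x) (f 0) := by
        rw [hf0, Set.uIcc_of_ge (by linarith)]
        exact ⟨le_of_lt hpos, le_of_lt h⟩
      obtain ⟨cc, hcc, hfcc⟩ := intermediate_value_uIcc (Hc.mono hsub) hv
      rw [Set.uIcc_of_le h2] at hcc
      exact absurd (le_csSup hKbdd ⟨⟨by linarith [hcc.1], hcc.2⟩, hfcc⟩)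
        (not_le.mpr (lt_of_lt_of_le h1 hcc.1))
  have hlow2 : ∀ x, d ≤ x → x ≤ 0 → ∃ z, 0 ≤ z ∧ z ≤ γc ∧ f z ≤ f x := by
    intro x h1 h2
    by_contra hcon; push_neg at hcon
    have hxd : d < x := by
      rcases eq_or_lt_of_le h1 with h | h
      · exfalso
        have h0 := hcon 0 le_rfl (le_of_lt hγ0)
        rw [hf0] at h0
        rw [← h, hfd] at h0
        linarith
      · exact h
    exact hnoRD (build_rd Hc hf0 hym1 hdep hpos hypc (by linarith) h2 hcon
      (fun w hw1 hw2 => hlt w (lt_of_lt_of_le hxd hw1) hw2))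
  refine ⟨d, hdym, hdneg, ⟨by linarith, hdneg, ?_⟩, hfd, ?_, ?_⟩
  · rintro ⟨w, ⟨hw1, hw2⟩, hfw⟩
    have h2 := hlt w hw1 hw2
    rw [hfw, hfd] at h2
    exact lt_irrefl _ h2
  · rintro v ⟨x, ⟨hx1, hx2⟩, rfl⟩
    have hple : ∃ p, γp ≤ p ∧ p ≤ γc ∧ f p ≤ f x := by
      rcases le_or_gt x 0 with h | h
      · obtain ⟨z, hz1, hz2, hz3⟩ := hlow2 x hx1 h
        obtain ⟨p, hp1, hp2, hp3⟩ := hCm z hz1 hz2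
        exact ⟨p, hp1, hp2, le_trans hp3 hz3⟩
      · exact hCm x (le_of_lt h) (by linarith)
    obtain ⟨p, hp1, hp2, hp3⟩ := hple
    have hup : f x ≤ f γc := by
      rcases le_or_gt x 0 with h | h
      · rcases eq_or_lt_of_le hx1 with h' | h'
        · exact le_of_eq (h' ▸ hfd)
        · exact le_of_lt (hlt x h' h)
      · exact le_of_lt (hrec x (le_of_lt h) (by linarith))
    have hsub : uIcc p γc ⊆ Icc (-1:ℝ) 1 :=
      uIcc_subset_Icc ⟨by linarith, by linarith⟩ ⟨by linarith, hγ1⟩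
    have hv : f x ∈ uIcc (f p) (f γc) := by
      rw [Set.uIcc_of_le (le_trans hp3 hup)]
      exact ⟨hp3, hup⟩
    obtain ⟨cc, hcc, hfcc⟩ := intermediate_value_uIcc (Hc.mono hsub) hv
    have hccm : cc ∈ Icc γp γc :=
      (uIcc_subset_Icc ⟨hp1, hp2⟩ ⟨le_of_lt hpc, le_rfl⟩) hcc
    exact ⟨cc, hccm, hfcc⟩
  · intro x h1 h2 h3
    by_contra hc; push_neg at hc
    obtain ⟨z, hz1, hz2, hz3⟩ := hlow2 x hc h2
    exact absurd (h3 z hz1 hz2) (not_lt.mpr hz3)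

end S12

namespace S12
open Filter

lemma factD {f : ℝ → ℝ} (Hc : ContinuousOn f (Icc 0 1)) (hf0 : f 0 = 0)
    {y : ℝ} (hdep : Departure f y) (hpos : 0 < f y) :
    ∃ β, ContourPoint f β ∧ y ≤ β ∧ 0 < f β ∧
      ∀ w, Departure f w → y < w → w ≤ β → 0 < f w := by
  set S : Set ℝ := {x | Departure f x ∧ 0 < f x ∧ y ≤ x ∧
    ∀ w, Departure f w → y < w → w ≤ x → 0 < f w} with hS
  have hyS : y ∈ S :=
    ⟨hdep, hpos, le_rfl, fun w _ h1 h2 => absurd (lt_of_lt_of_le h1 h2) (lt_irrefl y)⟩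
  have hSne : S.Nonempty := ⟨y, hyS⟩
  have hSbdd : BddAbove S := ⟨1, fun z hz => hz.1.2.1⟩
  set β := sSup S with hβ
  have hyβ : y ≤ β := le_csSup hSbdd hyS
  have hβ1 : β ≤ 1 := csSup_le hSne (fun z hz => hz.1.2.1)
  have hβ0 : 0 < β := lt_of_lt_of_le hdep.1 hyβ
  have hrecS : ∀ x, x ∈ S → ∀ z, 0 ≤ z → z < x → f z < f x :=
    fun x hx => record Hc hf0 hx.1 hx.2.1
  have hβS : β ∈ S := by
    by_contra hβS
    have hltβ : ∀ x, x ∈ S → x < β :=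
      fun x hx => lt_of_le_of_ne (le_csSup hSbdd hx) (fun hc => hβS (hc ▸ hx))
    obtain ⟨u, humono, huleβ, hutend, huS⟩ :=
      (isLUB_csSup hSne hSbdd).exists_seq_monotone_tendsto hSne
    have hfu : Monotone (fun n => f (u n)) := by
      intro m n hmn
      rcases eq_or_lt_of_le (humono hmn) with h | h
      · simp only [h]; exact le_rfl
      · exact le_of_lt (hrecS (u n) (huS n) (u m)
          (le_of_lt (lt_of_lt_of_le hdep.1 (huS m).2.2.1)) h)
    have htend : Tendsto (fun n => f (u n)) atTop (nhds (f β)) := by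
      have hcwa : ContinuousWithinAt f (Icc 0 1) β :=
        Hc.continuousWithinAt ⟨le_of_lt hβ0, hβ1⟩
      exact hcwa.tendsto.comp (tendsto_nhdsWithin_of_tendsto_nhds_of_eventually_within u
        hutend (Eventually.of_forall (fun n =>
          ⟨le_of_lt (lt_of_lt_of_le hdep.1 (huS n).2.2.1), (huS n).1.2.1⟩)))
    have hfuβ : ∀ n, f (u n) ≤ f β := hfu.ge_of_tendsto htend
    have hfβpos : 0 < f β := lt_of_lt_of_le (huS 0).2.1 (hfuβ 0)
    have hdepβ : Departure f β := by
      refine ⟨hβ0, hβ1, ?_⟩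
      rintro ⟨cc, ⟨hcc0, hccβ⟩, hfcc⟩
      obtain ⟨n, hn⟩ := (hutend.eventually (eventually_gt_nhds hccβ)).exists
      have h2 := hrecS (u n) (huS n) cc hcc0 hn
      rw [hfcc] at h2
      exact absurd (hfuβ n) (not_le.mpr h2)
    refine hβS ⟨hdepβ, hfβpos, hyβ, ?_⟩
    intro w hw hw1 hw2
    rcases eq_or_lt_of_le hw2 with h | h
    · rw [h]; exact hfβpos
    · obtain ⟨n, hn⟩ := (hutend.eventually (eventually_gt_nhds h)).exists
      exact (huS n).2.2.2 w hw hw1 (le_of_lt hn)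
  refine ⟨β, ⟨hβS.1, ?_⟩, hβS.2.2.1, hβS.2.1, hβS.2.2.2⟩
  intro x hx hβx
  have hfx : f x ≠ 0 := dep_ne hf0 hx
  rcases lt_or_gt_of_ne hfx with hneg | hposx
  · exact ⟨x, hx, hβx, le_rfl, mul_neg_of_pos_of_neg hβS.2.1 hneg⟩
  · by_contra hcon; push_neg at hcon
    have hxS : x ∈ S := by
      refine ⟨hx, hposx, le_trans hβS.2.2.1 (le_of_lt hβx), ?_⟩
      intro w hw hw1 hw2
      rcases le_or_gt w β with h | h
      · exact hβS.2.2.2 w hw hw1 h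
      · have hfw : f w ≠ 0 := dep_ne hf0 hw
        rcases lt_or_gt_of_ne hfw with h' | h'
        · exact absurd (mul_neg_of_pos_of_neg hβS.2.1 h') (not_lt.mpr (hcon w hw h hw2))
        · exact h'
    exact absurd (le_csSup hSbdd hxS) (not_le.mpr hβx)

lemma alt {f : ℝ → ℝ} (Hc : ContinuousOn f (Icc 0 1)) (hf0 : f 0 = 0)
    {a b : ℝ} (hca : ContourPoint f a) (hdb : Departure f b) (hab : a < b)
    (hnone : ∀ x, ContourPoint f x → a < x → x < b → False) :
    f a * f b < 0 := by
  have hfa : f a ≠ 0 := dep_ne hf0 hca.1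
  have hfb : f b ≠ 0 := dep_ne hf0 hdb
  by_contra hcon; push_neg at hcon
  obtain ⟨y, hy, hay, hyb, hsign⟩ := hca.2 b hdb hab
  have hyneb : y ≠ b := fun hc => by rw [hc] at hsign; exact absurd hsign (not_lt.mpr hcon)
  have hyb' : y < b := lt_of_le_of_ne hyb hyneb
  rcases lt_or_gt_of_ne hfa with haneg | hapos
  · have hfy : 0 < f y := by nlinarith
    obtain ⟨β, hβc, hyβ, hβpos, hβprop⟩ := factD Hc hf0 hy hfy
    have hβb : β < b := by
      rcases lt_or_ge β b with h | h
      · exact h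
      · exfalso
        have := hβprop b hdb hyb' h
        nlinarith
    exact hnone β hβc (lt_of_lt_of_le hay hyβ) hβb
  · have hfy : f y < 0 := by nlinarith
    obtain ⟨β, hβc, hyβ, hβpos, hβprop⟩ := factD Hc.neg (by simp [hf0])
      ((dep_neg f y).mpr hy) (show (0:ℝ) < -(f y) by linarith)
    have hβc' : ContourPoint f β := (contour_neg f β).mp hβc
    have hβb : β < b := by
      rcases lt_or_ge β b with h | h
      · exact h
      · exfalso
        have h2 := hβprop b ((dep_neg f b).mpr hdb) hyb' h
        have h3 : (0:ℝ) < -(f b) := h2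
        nlinarith
    exact hnone β hβc' (lt_of_lt_of_le hay hyβ) hβb

end S12

theorem stmt12 (t : ℝ → ℝ) (hpl : PiecewiseLinear t) (ht0 : t 0 = 0)
    (ym yp Ly : ℝ) (hlr : LiftableRange t ym yp) (hym : ym < 0)
    (hLy : IsLeast {L : ℝ | 0 < L ∧ t '' Icc ym 0 ⊆ t '' Icc 0 L} Ly)
    (k : ℕ) (hk : 1 ≤ k) (γ : ℕ → ℝ)
    (hmono : ∀ i ≤ k, γ i < γ (i + 1))
    (henum : ∀ i, 1 ≤ i → i ≤ k → ContourPoint t (γ i) ∧ yp < γ i ∧ γ i < Ly)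
    (hall : ∀ x, ContourPoint t x → yp < x → x < Ly → ∃ i, 1 ≤ i ∧ i ≤ k ∧ x = γ i)
    (hlast : γ (k + 1) = Ly)
    (hγ0 : (ContourPoint t (γ 0) ∧ ∀ x, ContourPoint t x → x < γ 1 → x ≤ γ 0) ∨
           (γ 0 = 0 ∧ ∀ x, ContourPoint t x → ¬ x < γ 1)) :
    ∃ δ : ℕ → ℝ, ym ≤ δ (k + 1) ∧ (∀ i, 1 ≤ i → i ≤ k → δ (i + 1) < δ i) ∧ δ 1 < 0 ∧
      ∀ i, 1 ≤ i → i ≤ k + 1 →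
        LeftDeparture t (δ i) ∧ t (δ i) = t (γ i) ∧
        t '' Icc (δ i) yp ⊆ t '' Icc (γ (i - 1)) (γ i) := by
  obtain ⟨hym1, hym0', hyp0, hyp1, hsub1, hnoRD⟩ := hlr
  have Hc : ContinuousOn t (Icc (-1) 1) := S12.pl_cont hpl
  have Hc01 : ContinuousOn t (Icc 0 1) := Hc.mono (Icc_subset_Icc (by norm_num) le_rfl)
  have hLy0 : 0 < Ly := hLy.1.1
  have hLy1 : Ly ≤ 1 := hLy.2 ⟨one_pos, hsub1⟩
  have gmono : ∀ a b : ℕ, a < b → b ≤ k + 1 → γ a < γ b := by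
    intro a b
    induction b with
    | zero => omega
    | succ b ih =>
      intro hab hbk
      rcases Nat.lt_or_ge a b with h | h
      · exact lt_trans (ih h (by omega)) (hmono b (by omega))
      · have hab' : a = b := by omega
        rw [hab']
        exact hmono b (by omega)
  have gmono' : ∀ a b : ℕ, a ≤ b → b ≤ k + 1 → γ a ≤ γ b := by
    intro a b h1 h2
    rcases eq_or_lt_of_le h1 with h | h
    · rw [h]
    · exact le_of_lt (gmono a b h h2)
  have HR := S12.claimR Hc ht0 hym1 hym hLy1 hLy
  have depLy : Departure t Ly := by
    refine ⟨hLy0, hLy1, ?_⟩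
    rintro ⟨cc, ⟨h1, h2⟩, h3⟩
    rcases HR with ⟨_, hrec, _⟩ | ⟨_, hrec, _⟩
    · exact absurd h3 (ne_of_lt (hrec cc h1 h2))
    · exact absurd h3 (ne_of_gt (hrec cc h1 h2))
  have deps : ∀ i, 1 ≤ i → i ≤ k + 1 → Departure t (γ i) := by
    intro i h1 h2
    rcases Nat.lt_or_ge i (k + 1) with h | h
    · exact (henum i h1 (by omega)).1.1
    · have hik : i = k + 1 := by omega
      rw [hik, hlast]; exact depLy
  have tne : ∀ i, 1 ≤ i → i ≤ k + 1 → t (γ i) ≠ 0 :=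
    fun i h1 h2 => S12.dep_ne ht0 (deps i h1 h2)
  have hypγ : ∀ i, 1 ≤ i → i ≤ k + 1 → yp < γ i := by
    intro i h1 h2
    rcases Nat.lt_or_ge i (k + 1) with h | h
    · exact (henum i h1 (by omega)).2.1
    · have hik : i = k + 1 := by omega
      rw [hik]
      exact lt_trans (henum k hk le_rfl).2.1 (hmono k le_rfl)
  have hγLy : ∀ i, 1 ≤ i → i ≤ k + 1 → γ i ≤ Ly := by
    intro i h1 h2
    rw [← hlast]
    exact gmono' i (k + 1) h2 le_rfl
  have hbetween : ∀ i, 1 ≤ i → i ≤ k + 1 →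
      ∀ x, ContourPoint t x → γ (i - 1) < x → x < γ i → False := by
    intro i h1 h2 x hx hx1 hx2
    rcases Nat.lt_or_ge i 2 with h | h
    · have hi1 : i = 1 := by omega
      rw [hi1] at hx1 hx2
      norm_num at hx1
      rcases hγ0 with ⟨hc0, hle⟩ | ⟨_, hno⟩
      · exact absurd (hle x hx hx2) (not_le.mpr hx1)
      · exact hno x hx hx2
    · have h1' : 1 ≤ i - 1 := by omega
      have h2' : i - 1 ≤ k := by omega
      have hxyp : yp < x := lt_trans (hypγ (i - 1) h1' (by omega)) hx1
      have hxLy : x < Ly := lt_of_lt_of_le hx2 (hγLy i h1 h2)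
      obtain ⟨j, hj1, hj2, hj3⟩ := hall x hx hxyp hxLy
      rcases Nat.lt_or_ge j i with h' | h'
      · have : γ j ≤ γ (i - 1) := gmono' j (i - 1) (by omega) (by omega)
        rw [← hj3] at this; linarith
      · have : γ i ≤ γ j := gmono' i j h' (by omega)
        rw [← hj3] at this; linarith
  have alts : ∀ i, 1 ≤ i → i ≤ k → t (γ i) * t (γ (i + 1)) < 0 := by
    intro i h1 h2
    refine S12.alt Hc01 ht0 (henum i h1 h2).1 (deps (i + 1) (by omega) (by omega))
      (hmono i h2) ?_
    intro x hx ha hb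
    refine hbetween (i + 1) (by omega) (by omega) x hx ?_ hb
    simpa using ha
  have recs : ∀ i, 1 ≤ i → i ≤ k + 1 → ∀ z, 0 ≤ z → z < γ i →
      (0 < t (γ i) → t z < t (γ i)) ∧ (t (γ i) < 0 → t (γ i) < t z) := by
    intro i h1 h2 z hz1 hz2
    constructor
    · intro hpos
      exact S12.record Hc01 ht0 (deps i h1 h2) hpos z hz1 hz2
    · intro hneg
      have h3 := S12.record Hc01.neg (by simp [ht0]) ((S12.dep_neg t (γ i)).mpr (deps i h1 h2))
        (show (0:ℝ) < -(t (γ i)) by linarith) z hz1 hz2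
      have h4 : -(t z) < -(t (γ i)) := h3
      linarith
  have key : ∀ i, 1 ≤ i → i ≤ k + 1 → ∃ d, ym ≤ d ∧ d < 0 ∧ LeftDeparture t d ∧
      t d = t (γ i) ∧ t '' Icc d yp ⊆ t '' Icc (γ (i - 1)) (γ i) ∧
      ∀ x, ym ≤ x → x ≤ 0 →
        ((0 < t (γ i) ∧ ∀ z, 0 ≤ z → z ≤ γ i → t x < t z) ∨
         (t (γ i) < 0 ∧ ∀ z, 0 ≤ z → z ≤ γ i → t z < t x)) → x < d := by
    intro i h1 h2
    have hprev0 : 0 ≤ γ (i - 1) := by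
      rcases Nat.lt_or_ge i 2 with h | h
      · have hi1 : i - 1 = 0 := by omega
        rw [hi1]
        rcases hγ0 with ⟨hc0, _⟩ | ⟨h0, _⟩
        · exact le_of_lt hc0.1.1
        · rw [h0]
      · exact le_of_lt (deps (i - 1) (by omega) (by omega)).1
    have hpc : γ (i - 1) < γ i := by
      have h3 := hmono (i - 1) (by omega)
      have hie : i - 1 + 1 = i := by omega
      rwa [hie] at h3
    have hprevsrc_or : γ (i - 1) = 0 ∨
        (Departure t (γ (i - 1)) ∧ t (γ (i - 1)) * t (γ i) < 0) := by
      rcases Nat.lt_or_ge i 2 with h | h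
      · have hi1 : i - 1 = 0 := by omega
        have hieq : i = 1 := by omega
        rcases hγ0 with ⟨hc0, hle⟩ | ⟨h0, _⟩
        · right
          have h3 := S12.alt Hc01 ht0 hc0 (deps 1 le_rfl (by omega)) (hmono 0 (by omega))
            (fun x hx ha hb => absurd (hle x hx hb) (not_le.mpr ha))
          rw [hi1, hieq]
          exact ⟨hc0.1, h3⟩
        · left; rw [hi1, h0]
      · right
        have h3 := alts (i - 1) (by omega) (by omega)
        have hie : i - 1 + 1 = i := by omega
        rw [hie] at h3
        exact ⟨deps (i - 1) (by omega) (by omega), h3⟩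
    rcases lt_or_gt_of_ne (tne i h1 h2) with hneg | hpos
    · -- negative value at γ i : work with g = -t
      have Hcg : ContinuousOn (fun x => -(t x)) (Icc (-1:ℝ) 1) := Hc.neg
      have hg0 : (fun x => -(t x)) 0 = 0 := by simp [ht0]
      have hnoRDg : ¬∃ y₁ y₂, RadialDeparture (fun x => -(t x)) y₁ y₂ ∧ ym ≤ y₁ ∧ yp < y₂ := by
        rintro ⟨a, b, hrd, h1', h2'⟩
        exact hnoRD ⟨a, b, (S12.RD_neg t a b).mp hrd, h1', h2'⟩
      have hdepg : Departure (fun x => -(t x)) (γ i) := (S12.dep_neg t (γ i)).mpr (deps i h1 h2)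
      have hposg : 0 < (fun x => -(t x)) (γ i) := by simp only []; linarith
      have hBg : ∃ yB, ym ≤ yB ∧ yB ≤ 0 ∧ (fun x => -(t x)) (γ i) ≤ (fun x => -(t x)) yB := by
        rcases Nat.lt_or_ge i (k + 1) with h | h
        · have hLyg : IsLeast {L : ℝ | 0 < L ∧ (fun x => -(t x)) '' Icc ym 0 ⊆
              (fun x => -(t x)) '' Icc 0 L} Ly := by
            have hseteq : {L : ℝ | 0 < L ∧ (fun x => -(t x)) '' Icc ym 0 ⊆
                (fun x => -(t x)) '' Icc 0 L} =
                {L : ℝ | 0 < L ∧ t '' Icc ym 0 ⊆ t '' Icc 0 L} := by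
              ext L
              simp only [Set.mem_setOf_eq, S12.imgsub_neg]
            rw [hseteq]; exact hLy
          exact S12.nonempty_left Hcg hg0 hym1 hnoRDg hLyg hdepg hposg (hypγ i h1 h2)
            ((henum i h1 (by omega)).2.2)
        · have hik : i = k + 1 := by omega
          rcases HR with ⟨hp, _, _⟩ | ⟨_, _, yA, hA1, hA2, hA3⟩
          · exfalso; rw [hik, hlast] at hneg; linarith
          · refine ⟨yA, hA1, hA2, ?_⟩
            show -(t (γ i)) ≤ -(t yA)
            rw [hik, hlast, hA3]
      have hprevsrcg : γ (i - 1) = 0 ∨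
          (Departure (fun x => -(t x)) (γ (i - 1)) ∧ (fun x => -(t x)) (γ (i - 1)) < 0) := by
        rcases hprevsrc_or with h | ⟨hd, hs⟩
        · left; exact h
        · right
          refine ⟨(S12.dep_neg t _).mpr hd, ?_⟩
          show -(t (γ (i - 1))) < 0
          nlinarith
      obtain ⟨d, hd1, hd2, hd3, hd4, hd5, hd6⟩ := S12.omni Hcg hg0 hym1 hnoRDg hprev0 hpc
        hdepg hposg (hypγ i h1 h2) hBg hprevsrcg
      refine ⟨d, hd1, hd2, (S12.leftdep_neg t d).mp hd3, ?_, (S12.imgsub_neg).mp hd5, ?_⟩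
      · have hd4' : -(t d) = -(t (γ i)) := hd4
        linarith
      · intro x hx1 hx2 hdisj
        rcases hdisj with ⟨hp, _⟩ | ⟨_, hlt⟩
        · linarith
        · refine hd6 x hx1 hx2 ?_
          intro z hz1 hz2
          have := hlt z hz1 hz2
          show -(t x) < -(t z)
          linarith
    · -- positive value at γ i
      have hB : ∃ yB, ym ≤ yB ∧ yB ≤ 0 ∧ t (γ i) ≤ t yB := by
        rcases Nat.lt_or_ge i (k + 1) with h | h
        · exact S12.nonempty_left Hc ht0 hym1 hnoRD hLy (deps i h1 h2) hpos (hypγ i h1 h2)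
            ((henum i h1 (by omega)).2.2)
        · have hik : i = k + 1 := by omega
          rcases HR with ⟨_, _, yB, h1', h2', h3'⟩ | ⟨hn, _, _⟩
          · exact ⟨yB, h1', h2', le_of_eq (by rw [hik, hlast, h3'])⟩
          · exfalso; rw [hik, hlast] at hpos; linarith
      have hprevsrct : γ (i - 1) = 0 ∨ (Departure t (γ (i - 1)) ∧ t (γ (i - 1)) < 0) := by
        rcases hprevsrc_or with h | ⟨hd, hs⟩
        · left; exact h
        · right; exact ⟨hd, by nlinarith⟩
      obtain ⟨d, hd1, hd2, hd3, hd4, hd5, hd6⟩ := S12.omni Hc ht0 hym1 hnoRD hprev0 hpc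
        (deps i h1 h2) hpos (hypγ i h1 h2) hB hprevsrct
      refine ⟨d, hd1, hd2, hd3, hd4, hd5, ?_⟩
      intro x hx1 hx2 hdisj
      rcases hdisj with ⟨_, hlt⟩ | ⟨hn, _⟩
      · exact hd6 x hx1 hx2 hlt
      · linarith
  have key' : ∀ i : ℕ, ∃ d : ℝ, 1 ≤ i → i ≤ k + 1 → ym ≤ d ∧ d < 0 ∧ LeftDeparture t d ∧
      t d = t (γ i) ∧ t '' Icc d yp ⊆ t '' Icc (γ (i - 1)) (γ i) ∧
      ∀ x, ym ≤ x → x ≤ 0 →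
        ((0 < t (γ i) ∧ ∀ z, 0 ≤ z → z ≤ γ i → t x < t z) ∨
         (t (γ i) < 0 ∧ ∀ z, 0 ≤ z → z ≤ γ i → t z < t x)) → x < d := by
    intro i
    by_cases h : 1 ≤ i ∧ i ≤ k + 1
    · obtain ⟨d, hd⟩ := key i h.1 h.2
      exact ⟨d, fun _ _ => hd⟩
    · exact ⟨0, fun h1 h2 => absurd ⟨h1, h2⟩ h⟩
  choose δf hδf using key'
  refine ⟨δf, (hδf (k + 1) (by omega) le_rfl).1, ?_, (hδf 1 le_rfl (by omega)).2.1, ?_⟩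
  · intro i h1 h2
    have si := hδf i h1 (by omega)
    have si1 := hδf (i + 1) (by omega) (by omega)
    have hts : t (γ i) * t (γ (i + 1)) < 0 := alts i h1 h2
    have heq : t (δf (i + 1)) = t (γ (i + 1)) := si1.2.2.2.1
    apply si.2.2.2.2.2 (δf (i + 1)) si1.1 (le_of_lt si1.2.1)
    rcases lt_or_gt_of_ne (tne i h1 (by omega)) with hneg | hpos
    · right
      refine ⟨hneg, ?_⟩
      intro z hz1 hz2
      have hpos1 : 0 < t (γ (i + 1)) := by nlinarith
      have h3 := (recs (i + 1) (by omega) (by omega) z hz1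
        (lt_of_le_of_lt hz2 (hmono i h2))).1 hpos1
      rw [heq]; linarith
    · left
      refine ⟨hpos, ?_⟩
      intro z hz1 hz2
      have hneg1 : t (γ (i + 1)) < 0 := by nlinarith
      have h3 := (recs (i + 1) (by omega) (by omega) z hz1
        (lt_of_le_of_lt hz2 (hmono i h2))).2 hneg1
      rw [heq]; linarith
  · intro i h1 h2
    have s := hδf i h1 h2
    exact ⟨s.2.2.1, s.2.2.2.1, s.2.2.2.2.1⟩
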